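/- Coercivity and existence of a minimizer for Version 1: under the standing assumptions on f and ρ̄ (in particular k ≤ ρ̄ ≤ K with 0 < k < K), the cost functional C⁽¹⁾ : ℝ^{N+1} → ℝ satisfies C⁽¹⁾(x) → ∞ as ‖x‖_∞ → ∞; consequently C⁽¹⁾ attains a global minimum on the affine hyperplane Ξ = {x ∈ ℝ^{N+1} : ∑ₙ xₙ = X₀}. -/

import Mathlib

open Real Filter Finset

/-- `Fi f x = F(x) = ∫₀ˣ f(y) dy`. -/
noncomputable def Fi (f : ℝ → ℝ) (x : ℝ) : ℝ := ∫ y in (0:ℝ)..x, f y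

/-- `Ft f x = F̃(x) = ∫₀ˣ y f(y) dy`. -/
noncomputable def Ft (f : ℝ → ℝ) (x : ℝ) : ℝ := ∫ y in (0:ℝ)..x, y * f y

/-- `Gf f Finv = G = F̃ ∘ F⁻¹`. -/
noncomputable def Gf (f Finv : ℝ → ℝ) (x : ℝ) : ℝ := Ft f (Finv x)

/-- `ab τ ρ x = ā(x) = exp(−τ ρ̄(x))`. -/
noncomputable def ab (τ : ℝ) (ρ : ℝ → ℝ) (x : ℝ) : ℝ := Real.exp (-(τ * ρ x))

/-- Version 1 dynamics: `E₀ = 0`, `E_{n+1} = ā(Eₙ + xₙ)·(Eₙ + xₙ)`. -/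
noncomputable def Ev (τ : ℝ) (ρ : ℝ → ℝ) (x : ℕ → ℝ) : ℕ → ℝ
  | 0 => 0
  | n + 1 => ab τ ρ (Ev τ ρ x n + x n) * (Ev τ ρ x n + x n)

/-- Version 1 cost functional `C⁽¹⁾`. -/
noncomputable def C1 (f Finv : ℝ → ℝ) (τ : ℝ) (ρ : ℝ → ℝ) (N : ℕ) (x : ℕ → ℝ) : ℝ :=
  ∑ n ∈ Finset.range (N + 1), (Gf f Finv (Ev τ ρ x n + x n) - Gf f Finv (Ev τ ρ x n))

set_option linter.unusedSectionVars false

lemma hasDerivAt_Fi {f : ℝ → ℝ} (hf : Continuous f) (x : ℝ) :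
    HasDerivAt (Fi f) (f x) x :=
  intervalIntegral.integral_hasDerivAt_right (hf.intervalIntegrable _ _)
    (hf.stronglyMeasurableAtFilter _ _) hf.continuousAt

lemma hasDerivAt_Ft {f : ℝ → ℝ} (hf : Continuous f) (x : ℝ) :
    HasDerivAt (Ft f) (x * f x) x :=
  intervalIntegral.integral_hasDerivAt_right
    ((continuous_id.mul hf).intervalIntegrable _ _)
    ((continuous_id.mul hf).stronglyMeasurableAtFilter _ _)
    (continuous_id.mul hf).continuousAt

lemma Fi_strictMono {f : ℝ → ℝ} (hf : Continuous f) (hfpos : ∀ x, 0 < f x) :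
    StrictMono (Fi f) := by
  apply strictMono_of_deriv_pos
  intro x
  rw [(hasDerivAt_Fi hf x).deriv]
  exact hfpos x

section FinvProps
variable {f Finv : ℝ → ℝ} (hf : Continuous f) (hfpos : ∀ x, 0 < f x)
  (hFinv₁ : ∀ x, Fi f (Finv x) = x) (hFinv₂ : ∀ x, Finv (Fi f x) = x)

include hf hfpos hFinv₁ hFinv₂

lemma Finv_eq_symm :
    Finv = ⇑(StrictMono.orderIsoOfSurjective (Fi f) (Fi_strictMono hf hfpos)
      (fun x => ⟨Finv x, hFinv₁ x⟩)).symm := by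
  funext x
  set e := StrictMono.orderIsoOfSurjective (Fi f) (Fi_strictMono hf hfpos)
      (fun x => ⟨Finv x, hFinv₁ x⟩)
  have h : e (Finv x) = x := hFinv₁ x
  rw [← h, e.symm_apply_apply]
  show Finv (Fi f (Finv x)) = Finv x
  rw [hFinv₁]

lemma Finv_continuous : Continuous Finv := by
  rw [Finv_eq_symm hf hfpos hFinv₁ hFinv₂]
  exact OrderIso.continuous _

lemma Finv_mono : Monotone Finv := by
  rw [Finv_eq_symm hf hfpos hFinv₁ hFinv₂]
  exact (OrderIso.strictMono _).monotone

lemma Finv_zero : Finv 0 = 0 := by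
  have h0 : Fi f 0 = 0 := by simp [Fi]
  have := hFinv₂ 0
  rwa [h0] at this

lemma hasDerivAt_Finv (x : ℝ) : HasDerivAt Finv (f (Finv x))⁻¹ x := by
  refine HasDerivAt.of_local_left_inverse
    ((Finv_continuous hf hfpos hFinv₁ hFinv₂).continuousAt)
    (hasDerivAt_Fi hf (Finv x)) (ne_of_gt (hfpos _)) ?_
  exact Eventually.of_forall hFinv₁

lemma hasDerivAt_Gf (x : ℝ) : HasDerivAt (Gf f Finv) (Finv x) x := by
  have h := (hasDerivAt_Ft hf (Finv x)).comp x (hasDerivAt_Finv hf hfpos hFinv₁ hFinv₂ x)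
  have heq : Finv x * f (Finv x) * (f (Finv x))⁻¹ = Finv x := by
    rw [mul_assoc, mul_inv_cancel₀ (ne_of_gt (hfpos _)), mul_one]
  rw [heq] at h
  exact h

lemma Gf_convex : ConvexOn ℝ Set.univ (Gf f Finv) := by
  have hd : ∀ x, HasDerivAt (Gf f Finv) (Finv x) x := hasDerivAt_Gf hf hfpos hFinv₁ hFinv₂
  refine MonotoneOn.convexOn_of_deriv convex_univ ?_ ?_ ?_
  · exact (fun x _ => ((hd x).differentiableAt.continuousAt).continuousWithinAt)
  · exact fun x _ => ((hd x).differentiableAt).differentiableWithinAt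
  · intro a _ b _ hab
    rw [(hd a).deriv, (hd b).deriv]
    exact Finv_mono hf hfpos hFinv₁ hFinv₂ hab
end FinvProps

lemma Ft_nonneg {f : ℝ → ℝ} (hfpos : ∀ x, 0 < f x) (u : ℝ) : 0 ≤ Ft f u := by
  rcases le_or_gt 0 u with h | h
  · exact intervalIntegral.integral_nonneg h
      (fun y hy => mul_nonneg hy.1 (hfpos y).le)
  · rw [Ft, intervalIntegral.integral_symm u 0]
    have : (∫ y in u..(0:ℝ), y * f y) ≤ 0 := by
      have := intervalIntegral.integral_nonneg (a := u) (b := 0) (μ := MeasureTheory.volume) (f := fun y => -(y * f y))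
        h.le (fun y hy => by have := mul_nonneg (neg_nonneg.2 hy.2) (hfpos y).le; simpa using this)
      rw [intervalIntegral.integral_neg] at this
      linarith
    linarith

lemma Ft_zero (f : ℝ → ℝ) : Ft f 0 = 0 := by simp [Ft]

lemma Gf_nonneg {f Finv : ℝ → ℝ} (hfpos : ∀ x, 0 < f x) (x : ℝ) : 0 ≤ Gf f Finv x :=
  Ft_nonneg hfpos _

lemma Gf_zero {f Finv : ℝ → ℝ} (hFinv0 : Finv 0 = 0) : Gf f Finv 0 = 0 := by
  rw [Gf, hFinv0, Ft_zero]

lemma Gf_scale {f Finv : ℝ → ℝ} (hconv : ConvexOn ℝ Set.univ (Gf f Finv))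
    (h0 : Gf f Finv 0 = 0) (hnn : ∀ x, 0 ≤ Gf f Finv x)
    {a : ℝ} (ha : 0 ≤ a) (ha1 : a ≤ 1) (s : ℝ) :
    Gf f Finv (a * s) ≤ a * Gf f Finv s := by
  have := hconv.2 (Set.mem_univ s) (Set.mem_univ 0) ha (by linarith : (0:ℝ) ≤ 1 - a)
    (by ring)
  simpa [h0] using this

lemma Ft_tendsto_atTop {f : ℝ → ℝ} (hf : Continuous f) (hfpos : ∀ x, 0 < f x)
    (htop : Tendsto (Fi f) atTop atTop) : Tendsto (Ft f) atTop atTop := by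
  have key : ∀ u : ℝ, 1 ≤ u → Fi f u - Fi f 1 + Ft f 1 ≤ Ft f u := by
    intro u hu
    have hint : ∀ a b : ℝ, IntervalIntegrable (fun y => y * f y) MeasureTheory.volume a b :=
      fun a b => ((continuous_id.mul hf).intervalIntegrable _ _)
    have hsplit : Ft f u = Ft f 1 + ∫ y in (1:ℝ)..u, y * f y := by
      rw [Ft, Ft, intervalIntegral.integral_add_adjacent_intervals (hint 0 1) (hint 1 u)]
    have hcmp : (∫ y in (1:ℝ)..u, f y) ≤ ∫ y in (1:ℝ)..u, y * f y := by
      apply intervalIntegral.integral_mono_on hu (hf.intervalIntegrable _ _) (hint 1 u)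
      intro y hy
      nlinarith [hfpos y, hy.1]
    have hsplit2 : Fi f u = Fi f 1 + ∫ y in (1:ℝ)..u, f y := by
      rw [Fi, Fi, intervalIntegral.integral_add_adjacent_intervals
        (hf.intervalIntegrable _ _) (hf.intervalIntegrable _ _)]
    rw [hsplit]
    rw [hsplit2]
    linarith
  refine tendsto_atTop_mono' atTop
    (f₁ := fun u : ℝ => Fi f u - Fi f 1 + Ft f 1) ?_ ?_
  · filter_upwards [eventually_ge_atTop (1:ℝ)] with u hu using key u hu
  · exact tendsto_atTop_add_const_right _ _ (tendsto_atTop_add_const_right _ _ htop)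

lemma Ft_tendsto_atBot {f : ℝ → ℝ} (hf : Continuous f) (hfpos : ∀ x, 0 < f x)
    (hbot : Tendsto (Fi f) atBot atBot) : Tendsto (Ft f) atBot atTop := by
  have key : ∀ u : ℝ, u ≤ -1 → Ft f (-1) + (Fi f (-1) - Fi f u) ≤ Ft f u := by
    intro u hu
    have hint : ∀ a b : ℝ, IntervalIntegrable (fun y => y * f y) MeasureTheory.volume a b :=
      fun a b => ((continuous_id.mul hf).intervalIntegrable _ _)
    have hsplit : Ft f u = Ft f (-1) + ∫ y in (-1:ℝ)..u, y * f y := by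
      rw [Ft, Ft, intervalIntegral.integral_add_adjacent_intervals (hint 0 (-1)) (hint (-1) u)]
    have hflip : (∫ y in (-1:ℝ)..u, y * f y) = -∫ y in u..(-1:ℝ), y * f y :=
      intervalIntegral.integral_symm u (-1)
    have hcmp : (∫ y in u..(-1:ℝ), y * f y) ≤ ∫ y in u..(-1:ℝ), -f y := by
      apply intervalIntegral.integral_mono_on hu (hint u (-1))
        ((hf.neg).intervalIntegrable _ _)
      intro y hy
      simp only [Pi.neg_apply]
      nlinarith [hfpos y, hy.2]
    have hneg : (∫ y in u..(-1:ℝ), -f y) = -(Fi f (-1) - Fi f u) := by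
      rw [intervalIntegral.integral_neg]
      have : Fi f (-1) = Fi f u + ∫ y in u..(-1:ℝ), f y := by
        rw [Fi, Fi, intervalIntegral.integral_add_adjacent_intervals
          (hf.intervalIntegrable _ _) (hf.intervalIntegrable _ _)]
      linarith
    rw [hsplit, hflip]
    rw [hneg] at hcmp
    linarith
  refine tendsto_atTop_mono' atBot
    (f₁ := fun u : ℝ => Ft f (-1) + (Fi f (-1) - Fi f u)) ?_ ?_
  · filter_upwards [eventually_le_atBot (-1:ℝ)] with u hu using key u hu
  · apply tendsto_atTop_add_const_left
    apply tendsto_atTop_add_const_left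
    exact tendsto_neg_atBot_atTop.comp hbot

lemma Finv_tendsto_atTop {f Finv : ℝ → ℝ} (hmono : Monotone Finv)
    (hFinv₂ : ∀ x, Finv (Fi f x) = x) : Tendsto Finv atTop atTop := by
  rw [tendsto_atTop_atTop]
  intro b
  exact ⟨Fi f b, fun a ha => by simpa [hFinv₂ b] using hmono ha⟩

lemma Finv_tendsto_atBot {f Finv : ℝ → ℝ} (hmono : Monotone Finv)
    (hFinv₂ : ∀ x, Finv (Fi f x) = x) : Tendsto Finv atBot atBot := by
  rw [tendsto_atBot_atBot]
  intro b
  exact ⟨Fi f b, fun a ha => by simpa [hFinv₂ b] using hmono ha⟩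

lemma Gf_large {G : ℝ → ℝ} (Gtop : Tendsto G atTop atTop)
    (Gbot : Tendsto G atBot atTop) (M : ℝ) :
    ∃ r : ℝ, 0 < r ∧ ∀ x : ℝ, r ≤ |x| → M ≤ G x := by
  obtain ⟨r₁, hr₁⟩ := (Gtop.eventually_ge_atTop M).exists_forall_of_atTop
  obtain ⟨r₂, hr₂⟩ := (Gbot.eventually_ge_atTop M).exists_forall_of_atBot
  refine ⟨max 1 (max r₁ (-r₂)), by positivity, fun x hx => ?_⟩
  rcases le_or_gt 0 x with h | h
  · apply hr₁
    have : |x| = x := abs_of_nonneg h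
    have h1 : max 1 (max r₁ (-r₂)) ≥ r₁ := le_trans (le_max_left _ _) (le_max_right _ _)
    linarith
  · apply hr₂
    have : |x| = -x := abs_of_neg h
    have h1 : max 1 (max r₁ (-r₂)) ≥ -r₂ := le_trans (le_max_right _ _) (le_max_right _ _)
    linarith

lemma ab_pos (τ : ℝ) (ρ : ℝ → ℝ) (x : ℝ) : 0 < ab τ ρ x := Real.exp_pos _

lemma ab_le {τ k : ℝ} {ρ : ℝ → ℝ} (hτ : 0 < τ) (hρk : ∀ x, k ≤ ρ x) (x : ℝ) :
    ab τ ρ x ≤ Real.exp (-(τ * k)) := by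
  apply Real.exp_le_exp.2
  have := hρk x
  nlinarith

lemma sum_lower {f Finv : ℝ → ℝ} {τ lam : ℝ} {ρ : ℝ → ℝ} {x : ℕ → ℝ}
    (hnn : ∀ s, 0 ≤ Gf f Finv s) (h0 : Gf f Finv 0 = 0)
    (hstep : ∀ n, Gf f Finv (Ev τ ρ x (n+1)) ≤ lam * Gf f Finv (Ev τ ρ x n + x n)) :
    ∀ m : ℕ, Gf f Finv (Ev τ ρ x m + x m)
        + (1 - lam) * ∑ n ∈ Finset.range m, Gf f Finv (Ev τ ρ x n + x n)
      ≤ ∑ n ∈ Finset.range (m+1),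
          (Gf f Finv (Ev τ ρ x n + x n) - Gf f Finv (Ev τ ρ x n)) := by
  intro m
  induction m with
  | zero => simp [Ev, h0]
  | succ m ih =>
    rw [Finset.sum_range_succ (n := m + 1), Finset.sum_range_succ (n := m)]
    have h1 := hstep m
    nlinarith [ih]

lemma C1_lower {f Finv : ℝ → ℝ} {τ lam : ℝ} {ρ : ℝ → ℝ} {x : ℕ → ℝ} {N : ℕ}
    (hnn : ∀ s, 0 ≤ Gf f Finv s) (h0 : Gf f Finv 0 = 0)
    (hlam0 : 0 ≤ lam) (hlam1 : lam ≤ 1)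
    (hstep : ∀ n, Gf f Finv (Ev τ ρ x (n+1)) ≤ lam * Gf f Finv (Ev τ ρ x n + x n)) :
    (∀ j ≤ N, (1 - lam) * Gf f Finv (Ev τ ρ x j + x j) ≤ C1 f Finv τ ρ N x)
    ∧ 0 ≤ C1 f Finv τ ρ N x := by
  have main := sum_lower hnn h0 hstep N
  rw [C1]
  constructor
  · intro j hj
    rcases eq_or_lt_of_le hj with rfl | hj
    · nlinarith [hnn (Ev τ ρ x j + x j),
        Finset.sum_nonneg (fun n (_ : n ∈ Finset.range j) => hnn (Ev τ ρ x n + x n))]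
    · have hmem : Gf f Finv (Ev τ ρ x j + x j)
          ≤ ∑ n ∈ Finset.range N, Gf f Finv (Ev τ ρ x n + x n) :=
        Finset.single_le_sum (fun n _ => hnn (Ev τ ρ x n + x n))
          (Finset.mem_range.2 hj)
      nlinarith [hnn (Ev τ ρ x N + x N)]
  · nlinarith [hnn (Ev τ ρ x N + x N),
      Finset.sum_nonneg (fun n (_ : n ∈ Finset.range N) => hnn (Ev τ ρ x n + x n))]

lemma Ev_congr {τ : ℝ} {ρ : ℝ → ℝ} {x y : ℕ → ℝ} :
    ∀ n : ℕ, (∀ i < n, x i = y i) → Ev τ ρ x n = Ev τ ρ y n := by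
  intro n
  induction n with
  | zero => intro _; rfl
  | succ n ih =>
    intro h
    have h1 : Ev τ ρ x n = Ev τ ρ y n := ih (fun i hi => h i (Nat.lt_succ_of_lt hi))
    have h2 : x n = y n := h n (Nat.lt_succ_self n)
    show ab τ ρ (Ev τ ρ x n + x n) * (Ev τ ρ x n + x n) = _
    rw [h1, h2]
    rfl

lemma C1_congr {f Finv : ℝ → ℝ} {τ : ℝ} {ρ : ℝ → ℝ} {N : ℕ} {x y : ℕ → ℝ}
    (h : ∀ i ≤ N, x i = y i) : C1 f Finv τ ρ N x = C1 f Finv τ ρ N y := by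
  unfold C1
  apply Finset.sum_congr rfl
  intro n hn
  have hn' : n ≤ N := Nat.lt_succ_iff.1 (Finset.mem_range.1 hn)
  have hE : Ev τ ρ x n = Ev τ ρ y n :=
    Ev_congr n (fun i hi => h i (le_trans (Nat.le_of_lt hi) hn'))
  rw [hE, h n hn']

noncomputable def trunc (N : ℕ) (v : Fin (N+1) → ℝ) : ℕ → ℝ :=
  fun n => if h : n < N + 1 then v ⟨n, h⟩ else 0

lemma trunc_continuous (N : ℕ) (n : ℕ) :
    Continuous fun v : Fin (N+1) → ℝ => trunc N v n := by
  unfold trunc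
  by_cases h : n < N + 1
  · simp only [dif_pos h]; exact continuous_apply _
  · simp only [dif_neg h]; exact continuous_const

lemma trunc_apply {N : ℕ} (v : Fin (N+1) → ℝ) {n : ℕ} (h : n ≤ N) :
    trunc N v n = v ⟨n, Nat.lt_succ_of_le h⟩ := by
  unfold trunc
  rw [dif_pos (Nat.lt_succ_of_le h)]

lemma trunc_sum {N : ℕ} (v : Fin (N+1) → ℝ) :
    ∑ n ∈ Finset.range (N+1), trunc N v n = ∑ i, v i := by
  rw [← Fin.sum_univ_eq_sum_range (fun n => trunc N v n)]
  apply Finset.sum_congr rfl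
  intro i _
  simp [trunc]
  exact fun h => absurd (Nat.lt_succ_iff.1 i.isLt) (not_le.2 h)

lemma Ev_cont {τ : ℝ} {ρ : ℝ → ℝ} (hρ : Continuous ρ) (N : ℕ) (n : ℕ) :
    Continuous fun v : Fin (N+1) → ℝ => Ev τ ρ (trunc N v) n := by
  induction n with
  | zero => exact continuous_const
  | succ n ih =>
    have hs : Continuous fun v : Fin (N+1) → ℝ => Ev τ ρ (trunc N v) n + trunc N v n :=
      ih.add (trunc_continuous N n)
    show Continuous fun v : Fin (N+1) → ℝ =>
      ab τ ρ (Ev τ ρ (trunc N v) n + trunc N v n) * (Ev τ ρ (trunc N v) n + trunc N v n)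
    exact ((Real.continuous_exp.comp ((continuous_const.mul (hρ.comp hs)).neg)).mul hs)

lemma C1_cont {f Finv : ℝ → ℝ} {τ : ℝ} {ρ : ℝ → ℝ} (hρ : Continuous ρ)
    (hG : Continuous (Gf f Finv)) (N : ℕ) :
    Continuous fun v : Fin (N+1) → ℝ => C1 f Finv τ ρ N (trunc N v) := by
  unfold C1
  apply continuous_finset_sum
  intro n _
  exact ((hG.comp ((Ev_cont hρ N n).add (trunc_continuous N n))).sub
    (hG.comp (Ev_cont hρ N n)))

/-- Coercivity of `C⁽¹⁾` (`C⁽¹⁾(x) → ∞` as `‖x‖_∞ → ∞`) and existence of a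
global minimizer on the hyperplane `Ξ = {x : ∑ₙ xₙ = X₀}`. -/
theorem C1_coercive_and_min_exists
    (f Finv : ℝ → ℝ) (hf : Continuous f) (hfpos : ∀ x, 0 < f x)
    (htop : Tendsto (Fi f) atTop atTop) (hbot : Tendsto (Fi f) atBot atBot)
    (hFinv₁ : ∀ x, Fi f (Finv x) = x) (hFinv₂ : ∀ x, Finv (Fi f x) = x)
    (τ : ℝ) (hτ : 0 < τ) (ρ : ℝ → ℝ) (hρ : ContDiff ℝ 1 ρ)
    (k K : ℝ) (hk : 0 < k) (hkK : k < K) (hρbd : ∀ x, k ≤ ρ x ∧ ρ x ≤ K)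
    (N : ℕ) (hN : 1 ≤ N) (X₀ : ℝ) (hX₀ : 0 < X₀) :
    (∀ M : ℝ, ∃ R : ℝ, ∀ x : ℕ → ℝ, (∃ n ≤ N, R ≤ |x n|) → M ≤ C1 f Finv τ ρ N x) ∧
    (∃ ξ : ℕ → ℝ, (∑ n ∈ Finset.range (N + 1), ξ n = X₀) ∧
      ∀ y : ℕ → ℝ, (∑ n ∈ Finset.range (N + 1), y n = X₀) →
        C1 f Finv τ ρ N ξ ≤ C1 f Finv τ ρ N y) := by
  -- basic properties of G
  have hGconv : ConvexOn ℝ Set.univ (Gf f Finv) := Gf_convex hf hfpos hFinv₁ hFinv₂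
  have hG0 : Gf f Finv 0 = 0 := Gf_zero (Finv_zero hf hfpos hFinv₁ hFinv₂)
  have hGnn : ∀ s, 0 ≤ Gf f Finv s := Gf_nonneg hfpos
  have hmono : Monotone Finv := Finv_mono hf hfpos hFinv₁ hFinv₂
  have hGtop : Tendsto (Gf f Finv) atTop atTop :=
    (Ft_tendsto_atTop hf hfpos htop).comp (Finv_tendsto_atTop hmono hFinv₂)
  have hGbot : Tendsto (Gf f Finv) atBot atTop :=
    (Ft_tendsto_atBot hf hfpos hbot).comp (Finv_tendsto_atBot hmono hFinv₂)
  -- the contraction factor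
  set lam : ℝ := Real.exp (-(τ * k)) with hlam_def
  have hlam0 : 0 < lam := Real.exp_pos _
  have hlam1 : lam < 1 := Real.exp_lt_one_iff.2 (by nlinarith)
  -- the one-step estimate
  have hstep : ∀ (x : ℕ → ℝ) (n : ℕ),
      Gf f Finv (Ev τ ρ x (n+1)) ≤ lam * Gf f Finv (Ev τ ρ x n + x n) := by
    intro x n
    have ha : ab τ ρ (Ev τ ρ x n + x n) ≤ lam := ab_le hτ (fun z => (hρbd z).1) _
    have ha0 : 0 < ab τ ρ (Ev τ ρ x n + x n) := ab_pos _ _ _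
    have h1 : Gf f Finv (Ev τ ρ x (n+1))
        ≤ ab τ ρ (Ev τ ρ x n + x n) * Gf f Finv (Ev τ ρ x n + x n) := by
      have := Gf_scale hGconv hG0 hGnn ha0.le (le_trans ha hlam1.le)
        (Ev τ ρ x n + x n)
      exact this
    calc Gf f Finv (Ev τ ρ x (n+1))
        ≤ ab τ ρ (Ev τ ρ x n + x n) * Gf f Finv (Ev τ ρ x n + x n) := h1
      _ ≤ lam * Gf f Finv (Ev τ ρ x n + x n) :=
          mul_le_mul_of_nonneg_right ha (hGnn _)
  -- coercivity, with an explicit radius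
  have coer : ∀ M : ℝ, ∃ R : ℝ, 0 < R ∧
      ∀ x : ℕ → ℝ, (∃ n ≤ N, R ≤ |x n|) → M ≤ C1 f Finv τ ρ N x := by
    intro M
    set M' : ℝ := |M| / (1 - lam) with hM'def
    obtain ⟨r, hr0, hr⟩ := Gf_large hGtop hGbot M'
    refine ⟨2 * r + 1, by positivity, ?_⟩
    rintro x ⟨m, hm, hxm⟩
    obtain ⟨hlow, hC1nn⟩ := C1_lower (x := x) (N := N) hGnn hG0 hlam0.le hlam1.le (hstep x)
    have key : ∃ j ≤ N, M' ≤ Gf f Finv (Ev τ ρ x j + x j) := by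
      rcases le_or_gt r |Ev τ ρ x m + x m| with hbig | hsmall
      · exact ⟨m, hm, hr _ hbig⟩
      · -- then |Ev m| is large, so m = j+1 and G(Ev m) ≤ lam * g j
        have hEm : r ≤ |Ev τ ρ x m| := by
          have := abs_sub_abs_le_abs_sub (x m) (-(Ev τ ρ x m))
          have habs : |x m - -(Ev τ ρ x m)| = |Ev τ ρ x m + x m| := by
            rw [sub_neg_eq_add, add_comm]
          rw [habs] at this
          simp only [abs_neg] at this
          linarith
        have hm0 : m ≠ 0 := by
          intro h0
          subst h0
          simp only [Ev, zero_add] at hEm hsmall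
          linarith
        rcases Nat.exists_eq_succ_of_ne_zero hm0 with ⟨j, rfl⟩
        refine ⟨j, le_trans (Nat.le_succ j) hm, ?_⟩
        have hGE : M' ≤ Gf f Finv (Ev τ ρ x (j+1)) := hr _ hEm
        have := hstep x j
        nlinarith [hGnn (Ev τ ρ x j + x j)]
    obtain ⟨j, hj, hGj⟩ := key
    have h1 := hlow j hj
    have hM'nn : 0 ≤ M' := div_nonneg (abs_nonneg M) (by linarith)
    have : |M| ≤ C1 f Finv τ ρ N x := by
      have h2 : (1 - lam) * M' ≤ (1 - lam) * Gf f Finv (Ev τ ρ x j + x j) :=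
        mul_le_mul_of_nonneg_left hGj (by linarith)
      have hne : (1 : ℝ) - lam ≠ 0 := by linarith
      have h3 : (1 - lam) * M' = |M| := by
        rw [hM'def, mul_comm, div_mul_cancel₀ _ hne]
      linarith
    linarith [le_abs_self M]
  constructor
  · intro M
    obtain ⟨R, _, hR⟩ := coer M
    exact ⟨R, hR⟩
  -- existence of a minimizer
  · have hGcont : Continuous (Gf f Finv) := by
      rw [continuous_iff_continuousAt]
      exact fun x => (hasDerivAt_Gf hf hfpos hFinv₁ hFinv₂ x).differentiableAt.continuousAt
    have hCcont : Continuous fun v : Fin (N+1) → ℝ => C1 f Finv τ ρ N (trunc N v) :=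
      C1_cont hρ.continuous hGcont N
    -- base point
    set vbar : Fin (N+1) → ℝ := fun i => if i = 0 then X₀ else 0 with hvbar
    have hvbar_sum : ∑ i, vbar i = X₀ := by simp [hvbar]
    obtain ⟨R₀, hR₀pos, hR₀⟩ := coer (C1 f Finv τ ρ N (trunc N vbar))
    set R : ℝ := max R₀ (X₀ + 1) with hRdef
    have hRX : X₀ + 1 ≤ R := le_max_right _ _
    have hRpos : 0 < R := lt_of_lt_of_le (by linarith) hRX
    set Kset : Set (Fin (N+1) → ℝ) :=
      (Set.univ.pi fun _ => Set.Icc (-R) R) ∩ {v | ∑ i, v i = X₀} with hKdef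
    have hKcompact : IsCompact Kset := by
      apply IsCompact.inter_right (isCompact_univ_pi fun i => isCompact_Icc)
      exact isClosed_eq (continuous_finset_sum _ fun i _ => continuous_apply i)
        continuous_const
    have hvbarK : vbar ∈ Kset := by
      constructor
      · intro i _
        have hvals : vbar i = X₀ ∨ vbar i = 0 := by
          by_cases h : i = 0
          · left; simp [hvbar, h]
          · right; simp [hvbar, h]
        rw [Set.mem_Icc]
        rcases hvals with h | h <;> rw [h] <;> constructor <;> linarith
      · exact hvbar_sum
    obtain ⟨w, hwK, hwmin⟩ := hKcompact.exists_isMinOn ⟨vbar, hvbarK⟩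
      hCcont.continuousOn
    refine ⟨trunc N w, ?_, ?_⟩
    · rw [trunc_sum]; exact hwK.2
    · intro y hy
      by_cases hcase : ∀ n ≤ N, |y n| < R
      · -- y is inside the box: compare via the compact minimum
        set wy : Fin (N+1) → ℝ := fun i => y i with hwy
        have hagree : ∀ i ≤ N, trunc N wy i = y i := by
          intro i hi
          rw [trunc_apply wy hi]
        have hyeq : C1 f Finv τ ρ N (trunc N wy) = C1 f Finv τ ρ N y := C1_congr hagree
        have hwyK : wy ∈ Kset := by
          constructor
          · intro i _
            have := hcase i.val (Nat.lt_succ_iff.1 i.isLt)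
            rw [Set.mem_Icc]
            exact abs_le.1 this.le
          · show ∑ i, wy i = X₀
            rw [← trunc_sum wy, ← hy]
            apply Finset.sum_congr rfl
            intro n hn
            exact hagree n (Nat.lt_succ_iff.1 (Finset.mem_range.1 hn))
        calc C1 f Finv τ ρ N (trunc N w) ≤ C1 f Finv τ ρ N (trunc N wy) :=
              isMinOn_iff.1 hwmin wy hwyK
          _ = C1 f Finv τ ρ N y := hyeq
      · -- y has a big coordinate: use coercivity
        push_neg at hcase
        obtain ⟨n, hn, hRn⟩ := hcase
        have h1 : C1 f Finv τ ρ N (trunc N vbar) ≤ C1 f Finv τ ρ N y :=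
          hR₀ y ⟨n, hn, le_trans (le_max_left _ _) hRn⟩
        have h2 : C1 f Finv τ ρ N (trunc N w) ≤ C1 f Finv τ ρ N (trunc N vbar) :=
          isMinOn_iff.1 hwmin vbar hvbarK
        linarith
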